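/- arXiv:2209.01159 — 2 statements merged into one kernel-verified Lean document; each statement's English description precedes it below -/
import Mathlib

section
/- Derivatives of the cost function at zero-padded points reduce to derivatives at the original point: for every p ≥ 1 and every (β⋆,γ⋆) ∈ ℝ^p × ℝ^p, (a) for 2 ≤ l ≤ p+1, ∂E_{p+1}/∂β_l evaluated at Γ^{p+1}(l,l) equals ∂E_p/∂β_{l-1} evaluated at (β⋆,γ⋆); (b) for 1 ≤ l ≤ p, ∂E_{p+1}/∂γ_l at Γ^{p+1}(l,l) equals ∂E_p/∂γ_l at (β⋆,γ⋆); (c) for 1 ≤ l ≤ p, ∂E_{p+1}/∂β_l at Γ^{p+1}(l,l+1) equals ∂E_p/∂β_l at (β⋆,γ⋆); (d) for 1 ≤ l ≤ p, ∂E_{p+1}/∂γ_{l+1} at Γ^{p+1}(l,l+1) equals ∂E_p/∂γ_l at (β⋆,γ⋆). -/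
open Matrix Complex

noncomputable section

/-- Computational basis index set for `n` qubits, identified with `Fin 2 ^ n` via binary digits. -/
abbrev QIdx (n : ℕ) := Fin n → Fin 2

/-- The Pauli X matrix. -/
def pauliX : Matrix (Fin 2) (Fin 2) ℂ := !![0, 1; 1, 0]

/-- The Pauli Z matrix. -/
def pauliZ : Matrix (Fin 2) (Fin 2) ℂ := !![1, 0; 0, -1]

/-- The `n`-fold Kronecker product with `M` in the `i`-th tensor factor and the 2×2 identity in
every other factor, realized as a matrix on `ℂ^(2^n)` with indices `Fin n → Fin 2`. -/
def pauliAt {n : ℕ} (M : Matrix (Fin 2) (Fin 2) ℂ) (i : Fin n) :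
    Matrix (QIdx n) (QIdx n) ℂ :=
  Matrix.of fun s t => ∏ j, if j = i then M (s j) (t j) else if s j = t j then 1 else 0

/-- `σ^x_i`. -/
def sigmaX {n : ℕ} (i : Fin n) : Matrix (QIdx n) (QIdx n) ℂ := pauliAt pauliX i

/-- `σ^z_i`. -/
def sigmaZ {n : ℕ} (i : Fin n) : Matrix (QIdx n) (QIdx n) ℂ := pauliAt pauliZ i

lemma sigmaZ_eq_diagonal {n : ℕ} (i : Fin n) :
    sigmaZ i = Matrix.diagonal (fun s => pauliZ (s i) (s i)) := by
  ext s t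
  simp only [sigmaZ, pauliAt, Matrix.of_apply, Matrix.diagonal_apply]
  by_cases h : s = t
  · subst h
    simp [Finset.prod_ite_eq']
  · rw [if_neg h]
    obtain ⟨j₀, hj₀⟩ := Function.ne_iff.mp h
    refine Finset.prod_eq_zero (Finset.mem_univ j₀) ?_
    by_cases hji : j₀ = i
    · subst hji
      rw [if_pos rfl]
      have hz : ∀ a b : Fin 2, a ≠ b → pauliZ a b = 0 := by
        intro a b hab
        fin_cases a <;> fin_cases b <;> simp_all [pauliZ]
      exact hz _ _ hj₀
    · rw [if_neg hji, if_neg hj₀]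

lemma sigmaZ_mul_comm {n : ℕ} (i j : Fin n) : sigmaZ i * sigmaZ j = sigmaZ j * sigmaZ i := by
  rw [sigmaZ_eq_diagonal, sigmaZ_eq_diagonal, Matrix.diagonal_mul_diagonal,
    Matrix.diagonal_mul_diagonal]
  ext s
  simp [mul_comm]

/-- The MaxCut Hamiltonian `H_C = Σ_{{i,j} ∈ E} σ^z_i σ^z_j`. -/
def hamC (n : ℕ) (G : SimpleGraph (Fin n)) [DecidableRel G.Adj] :
    Matrix (QIdx n) (QIdx n) ℂ :=
  ∑ e ∈ G.edgeFinset,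
    Sym2.lift ⟨fun i j => sigmaZ i * sigmaZ j, fun i j => sigmaZ_mul_comm i j⟩ e

/-- The mixing Hamiltonian `H_B = -Σ_i σ^x_i`. -/
def hamB (n : ℕ) : Matrix (QIdx n) (QIdx n) ℂ := -(∑ i : Fin n, sigmaX i)

/-- `U_B(β) = exp(-i β H_B)`. -/
def uB (n : ℕ) (β : ℝ) : Matrix (QIdx n) (QIdx n) ℂ :=
  NormedSpace.exp ((-(Complex.I) * (β : ℂ)) • hamB n)

/-- `U_C(γ) = exp(-i γ H_C)`. -/
def uC (n : ℕ) (G : SimpleGraph (Fin n)) [DecidableRel G.Adj] (γ : ℝ) :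
    Matrix (QIdx n) (QIdx n) ℂ :=
  NormedSpace.exp ((-(Complex.I) * (γ : ℂ)) • hamC n G)

/-- The plus state `|+⟩ = 2^{-n/2} (1,…,1)ᵀ`. -/
def plusState (n : ℕ) : QIdx n → ℂ := fun _ => ((Real.sqrt 2 : ℂ))⁻¹ ^ n

/-- The `m`-th layer `U_B(β_{m+1}) U_C(γ_{m+1})` of the QAOA circuit (`m` is 0-indexed);
`1` if `m` is out of range. -/
def qaoaLayer (n : ℕ) (G : SimpleGraph (Fin n)) [DecidableRel G.Adj] {p : ℕ}
    (β γ : Fin p → ℝ) (m : ℕ) : Matrix (QIdx n) (QIdx n) ℂ :=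
  if h : m < p then uB n (β ⟨m, h⟩) * uC n G (γ ⟨m, h⟩) else 1

/-- The ordered product of the (0-indexed) layers `a, a+1, …, a+len-1` of the QAOA circuit, with
higher layers acting later (to the left). -/
def uProd (n : ℕ) (G : SimpleGraph (Fin n)) [DecidableRel G.Adj] {p : ℕ}
    (β γ : Fin p → ℝ) (a len : ℕ) : Matrix (QIdx n) (QIdx n) ℂ :=
  (((List.range' a len).reverse).map (qaoaLayer n G β γ)).prod

/-- The depth-`p` QAOA state `|β,γ⟩ = U_B(β_p) U_C(γ_p) ⋯ U_B(β_1) U_C(γ_1) |+⟩`. -/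
def qaoaState (n : ℕ) (G : SimpleGraph (Fin n)) [DecidableRel G.Adj] {p : ℕ}
    (β γ : Fin p → ℝ) : QIdx n → ℂ :=
  (uProd n G β γ 0 p).mulVec (plusState n)

/-- The depth-`p` QAOA cost function `E_p(β,γ) = ⟨β,γ| H_C |β,γ⟩` as a real-valued function on
`ℝ^p × ℝ^p`. -/
def energyE (n : ℕ) (G : SimpleGraph (Fin n)) [DecidableRel G.Adj] (p : ℕ)
    (x : (Fin p → ℝ) × (Fin p → ℝ)) : ℝ :=
  (star (qaoaState n G x.1 x.2) ⬝ᵥ (hamC n G).mulVec (qaoaState n G x.1 x.2)).re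

/-- The point `Γ^{p+1}(i,j)` obtained from `(β⋆,γ⋆) ∈ ℝ^p × ℝ^p` by inserting a `0` at
position `i` in the `β`-part and at position `j` in the `γ`-part. -/
def padded {p : ℕ} (x : (Fin p → ℝ) × (Fin p → ℝ)) (i j : Fin (p + 1)) :
    (Fin (p + 1) → ℝ) × (Fin (p + 1) → ℝ) :=
  (i.insertNth 0 x.1, j.insertNth 0 x.2)

/-- The coordinate direction in `ℝ^p × ℝ^p` corresponding to `β_l` (`Sum.inl l`) or
`γ_l` (`Sum.inr l`). -/
def coordDir {p : ℕ} : Fin p ⊕ Fin p → (Fin p → ℝ) × (Fin p → ℝ) :=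
  Sum.elim (fun l => (Pi.single l 1, 0)) (fun l => (0, Pi.single l 1))

/-- Partial derivative of a real function on `ℝ^p × ℝ^p` in the coordinate direction `a`. -/
def pderiv' {p : ℕ} (f : ((Fin p → ℝ) × (Fin p → ℝ)) → ℝ)
    (a : Fin p ⊕ Fin p) (x : (Fin p → ℝ) × (Fin p → ℝ)) : ℝ :=
  fderiv ℝ f x (coordDir a)

/-- The Hessian matrix of a real function on `ℝ^p × ℝ^p`, with rows and columns indexed by the
coordinates `β_1,…,β_p` (`Sum.inl`) and `γ_1,…,γ_p` (`Sum.inr`). -/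
def hessian {p : ℕ} (f : ((Fin p → ℝ) × (Fin p → ℝ)) → ℝ)
    (x : (Fin p → ℝ) × (Fin p → ℝ)) : Matrix (Fin p ⊕ Fin p) (Fin p ⊕ Fin p) ℝ :=
  Matrix.of fun a b => pderiv' (pderiv' f b) a x

/-- The commutator `[A, B] = AB - BA`. -/
def commMat {n : ℕ} (A B : Matrix (QIdx n) (QIdx n) ℂ) : Matrix (QIdx n) (QIdx n) ℂ :=
  A * B - B * A

end


section Aux

open NormedSpace

attribute [local instance] Matrix.linftyOpSemiNormedRing Matrix.linftyOpNormedRing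
  Matrix.linftyOpNormedAlgebra

noncomputable section

variable {n p : ℕ} (G : SimpleGraph (Fin n)) [DecidableRel G.Adj]

lemma expHam_add (H : Matrix (QIdx n) (QIdx n) ℂ) (a b : ℝ) :
    NormedSpace.exp ((-Complex.I * ((a + b : ℝ) : ℂ)) • H) =
      NormedSpace.exp ((-Complex.I * (a : ℂ)) • H) *
        NormedSpace.exp ((-Complex.I * (b : ℂ)) • H) := by
  rw [← Matrix.exp_add_of_commute _ _ (((Commute.refl H).smul_left _).smul_right _)]
  congr 1
  rw [← add_smul]
  congr 1
  push_cast
  ring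

lemma uB_zero (n : ℕ) : uB n 0 = 1 := by
  simp [uB, NormedSpace.exp_zero]

lemma uC_zero : uC n G 0 = 1 := by
  simp [uC, NormedSpace.exp_zero]

lemma uB_add (n : ℕ) (a b : ℝ) : uB n (a + b) = uB n a * uB n b := expHam_add _ a b

lemma uC_add (a b : ℝ) : uC n G (a + b) = uC n G a * uC n G b := expHam_add _ a b

lemma qaoaLayer_lt {β γ : Fin p → ℝ} {m : ℕ} (h : m < p) :
    qaoaLayer n G β γ m = uB n (β ⟨m, h⟩) * uC n G (γ ⟨m, h⟩) := dif_pos h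

lemma ins_lt (i : Fin (p + 1)) (x : ℝ) (f : Fin p → ℝ) {m : ℕ} (h' : m < p + 1) (h : m < p)
    (hm : m < i.val) : (i.insertNth x f : Fin (p + 1) → ℝ) ⟨m, h'⟩ = f ⟨m, h⟩ := by
  have e : (⟨m, h'⟩ : Fin (p + 1)) = i.succAbove ⟨m, h⟩ := by
    rw [Fin.succAbove_of_castSucc_lt _ _ (by simpa [Fin.lt_def] using hm)]
    rfl
  rw [e, Fin.insertNth_apply_succAbove]

lemma ins_gt (i : Fin (p + 1)) (x : ℝ) (f : Fin p → ℝ) {m : ℕ} (h' : m < p + 1) (h : m - 1 < p)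
    (hm : i.val < m) : (i.insertNth x f : Fin (p + 1) → ℝ) ⟨m, h'⟩ = f ⟨m - 1, h⟩ := by
  have e : (⟨m, h'⟩ : Fin (p + 1)) = i.succAbove ⟨m - 1, h⟩ := by
    rw [Fin.succAbove_of_le_castSucc _ _ (by simp [Fin.le_def]; omega)]
    ext
    simp [Fin.val_succ]
    omega
  rw [e, Fin.insertNth_apply_succAbove]

lemma ins_self (i : Fin (p + 1)) (x : ℝ) (f : Fin p → ℝ) {m : ℕ} (h' : m < p + 1)
    (hm : m = i.val) : (i.insertNth x f : Fin (p + 1) → ℝ) ⟨m, h'⟩ = x := by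
  have e : (⟨m, h'⟩ : Fin (p + 1)) = i := by
    ext
    exact hm
  rw [e, Fin.insertNth_apply_same]

lemma insertNth_add_single (i : Fin (p + 1)) (t : ℝ) (f : Fin p → ℝ) :
    (i.insertNth 0 f : Fin (p + 1) → ℝ) + t • (Pi.single i 1 : Fin (p + 1) → ℝ)
      = (i.insertNth t f : Fin (p + 1) → ℝ) := by
  funext j
  rcases eq_or_ne j i with rfl | hj
  · simp [Fin.insertNth_apply_same]
  · obtain ⟨m, rfl⟩ := Fin.exists_succAbove_eq hj
    simp [Fin.insertNth_apply_succAbove, Pi.single_apply, hj]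

lemma add_single_apply (f : Fin p → ℝ) (k j : Fin p) (t : ℝ) :
    (f + t • ((Pi.single k 1 : Fin p → ℝ) : Fin p → ℝ)) j = if j = k then f j + t else f j := by
  by_cases h : j = k <;> simp [Pi.single_apply, h]

lemma prod_merge {M : Type*} [Monoid M] (f g : ℕ → M) (p k : ℕ) (hk : k < p)
    (h1 : ∀ m, m < k → f m = g m)
    (h2 : ∀ m, k + 2 ≤ m → m < p + 1 → f m = g (m - 1))
    (hm : f (k + 1) * f k = g k) :
    ((List.range' 0 (p + 1)).reverse.map f).prod = ((List.range' 0 p).reverse.map g).prod := by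
  have e1 : List.range' 0 (p + 1)
      = (List.range' 0 k ++ List.range' k 2) ++ List.range' (k + 2) (p - 1 - k) := by
    have h1' := List.range'_append (s := 0) (m := k) (n := 2) (step := 1)
    have h2' := List.range'_append (s := 0) (m := k + 2) (n := p - 1 - k) (step := 1)
    simp only [one_mul, Nat.zero_add] at h1' h2'
    rw [h1', h2']
    congr 1
    omega
  have e2 : List.range' 0 p
      = (List.range' 0 k ++ List.range' k 1) ++ List.range' (k + 1) (p - 1 - k) := by
    have h1' := List.range'_append (s := 0) (m := k) (n := 1) (step := 1)
    have h2' := List.range'_append (s := 0) (m := k + 1) (n := p - 1 - k) (step := 1)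
    simp only [one_mul, Nat.zero_add] at h1' h2'
    rw [h1', h2']
    congr 1
    omega
  have eA : (List.range' 0 k).map f = (List.range' 0 k).map g := by
    refine List.map_congr_left fun a ha => ?_
    have := List.mem_range'_1.mp ha
    exact h1 a (by omega)
  have eC : (List.range' (k + 2) (p - 1 - k)).map f
      = (List.range' (k + 1) (p - 1 - k)).map g := by
    rw [List.range'_eq_map_range, List.range'_eq_map_range, List.map_map, List.map_map]
    refine List.map_congr_left fun a ha => ?_
    have haL : a < p - 1 - k := List.mem_range.mp ha
    show f (k + 2 + a) = g (k + 1 + a)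
    rw [h2 (k + 2 + a) (by omega) (by omega)]
    congr 1
    omega
  have eB : ((List.range' k 2).map f).reverse.prod = ((List.range' k 1).map g).reverse.prod := by
    show ([k, k + 1].map f).reverse.prod = ([k].map g).reverse.prod
    simpa using hm
  rw [e1, e2]
  simp only [List.reverse_append, List.map_append, List.prod_append, List.map_reverse]
  rw [eA, eC, eB]

lemma uProd_merge (β' γ' : Fin (p + 1) → ℝ) (β'' γ'' : Fin p → ℝ) (k : ℕ) (hk : k < p)
    (h1 : ∀ m, m < k → qaoaLayer n G β' γ' m = qaoaLayer n G β'' γ'' m)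
    (h2 : ∀ m, k + 2 ≤ m → m < p + 1 → qaoaLayer n G β' γ' m = qaoaLayer n G β'' γ'' (m - 1))
    (hm : qaoaLayer n G β' γ' (k + 1) * qaoaLayer n G β' γ' k = qaoaLayer n G β'' γ'' k) :
    uProd n G β' γ' 0 (p + 1) = uProd n G β'' γ'' 0 p :=
  prod_merge _ _ p k hk h1 h2 hm

lemma keyA (k : Fin p) (β γ : Fin p → ℝ) (t : ℝ) :
    energyE n G (p + 1) ((k.succ.insertNth t β : Fin (p + 1) → ℝ), (k.succ.insertNth 0 γ : Fin (p + 1) → ℝ))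
      = energyE n G p (β + t • (Pi.single k 1 : Fin p → ℝ), γ) := by
  have hst : qaoaState n G ((k.succ.insertNth t β : Fin (p + 1) → ℝ)) ((k.succ.insertNth 0 γ : Fin (p + 1) → ℝ))
      = qaoaState n G (β + t • (Pi.single k 1 : Fin p → ℝ)) γ := by
    unfold qaoaState
    rw [uProd_merge G _ _ _ _ k.val k.isLt ?h1 ?h2 ?hm]
    case h1 =>
      intro m hmk
      have hmp : m < p := by omega
      have hm1 : m < p + 1 := by omega
      rw [qaoaLayer_lt G hm1, qaoaLayer_lt G hmp,
        ins_lt _ _ _ hm1 hmp (by simp [Fin.val_succ]; omega),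
        ins_lt _ _ _ hm1 hmp (by simp [Fin.val_succ]; omega),
        add_single_apply, if_neg (by simp [Fin.ext_iff]; omega)]
    case h2 =>
      intro m hle hlt
      have hmp : m - 1 < p := by omega
      rw [qaoaLayer_lt G hlt, qaoaLayer_lt G hmp,
        ins_gt _ _ _ hlt hmp (by simp [Fin.val_succ]; omega),
        ins_gt _ _ _ hlt hmp (by simp [Fin.val_succ]; omega),
        add_single_apply, if_neg (by simp [Fin.ext_iff]; omega)]
    case hm =>
      have hk1 : k.val + 1 < p + 1 := by omega
      have hk0 : (k.val : ℕ) < p + 1 := by omega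
      rw [qaoaLayer_lt G hk1, qaoaLayer_lt G hk0, qaoaLayer_lt G k.isLt,
        ins_self _ _ _ hk1 (by simp [Fin.val_succ]),
        ins_self _ _ _ hk1 (by simp [Fin.val_succ]),
        ins_lt _ _ _ hk0 k.isLt (by simp [Fin.val_succ]),
        ins_lt _ _ _ hk0 k.isLt (by simp [Fin.val_succ]),
        add_single_apply, if_pos (by simp [Fin.ext_iff])]
      simp only [Fin.eta]
      rw [uC_zero, mul_one, ← mul_assoc, ← uB_add, add_comm t (β k)]
  simp only [energyE, hst]

lemma keyB (k : Fin p) (β γ : Fin p → ℝ) (t : ℝ) :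
    energyE n G (p + 1) ((k.castSucc.insertNth 0 β : Fin (p + 1) → ℝ), (k.castSucc.insertNth t γ : Fin (p + 1) → ℝ))
      = energyE n G p (β, γ + t • (Pi.single k 1 : Fin p → ℝ)) := by
  have hst : qaoaState n G ((k.castSucc.insertNth 0 β : Fin (p + 1) → ℝ)) ((k.castSucc.insertNth t γ : Fin (p + 1) → ℝ))
      = qaoaState n G β (γ + t • (Pi.single k 1 : Fin p → ℝ)) := by
    unfold qaoaState
    rw [uProd_merge G _ _ _ _ k.val k.isLt ?h1 ?h2 ?hm]
    case h1 =>
      intro m hmk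
      have hmp : m < p := by omega
      have hm1 : m < p + 1 := by omega
      rw [qaoaLayer_lt G hm1, qaoaLayer_lt G hmp,
        ins_lt _ _ _ hm1 hmp (by simpa using hmk),
        ins_lt _ _ _ hm1 hmp (by simpa using hmk),
        add_single_apply, if_neg (by simp [Fin.ext_iff]; omega)]
    case h2 =>
      intro m hle hlt
      have hmp : m - 1 < p := by omega
      rw [qaoaLayer_lt G hlt, qaoaLayer_lt G hmp,
        ins_gt _ _ _ hlt hmp (by simp; omega),
        ins_gt _ _ _ hlt hmp (by simp; omega),
        add_single_apply, if_neg (by simp [Fin.ext_iff]; omega)]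
    case hm =>
      have hk1 : k.val + 1 < p + 1 := by omega
      have hk0 : (k.val : ℕ) < p + 1 := by omega
      rw [qaoaLayer_lt G hk1, qaoaLayer_lt G hk0, qaoaLayer_lt G k.isLt,
        ins_gt _ _ _ hk1 (by omega : k.val + 1 - 1 < p) (by simp),
        ins_gt _ _ _ hk1 (by omega : k.val + 1 - 1 < p) (by simp),
        ins_self _ _ _ hk0 (by simp),
        ins_self _ _ _ hk0 (by simp),
        add_single_apply, if_pos (by simp [Fin.ext_iff])]
      simp only [Nat.add_sub_cancel, Fin.eta]
      rw [uB_zero, one_mul, mul_assoc, ← uC_add]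
  simp only [energyE, hst]

lemma keyC (k : Fin p) (β γ : Fin p → ℝ) (t : ℝ) :
    energyE n G (p + 1) ((k.castSucc.insertNth t β : Fin (p + 1) → ℝ), (k.succ.insertNth 0 γ : Fin (p + 1) → ℝ))
      = energyE n G p (β + t • (Pi.single k 1 : Fin p → ℝ), γ) := by
  have hst : qaoaState n G ((k.castSucc.insertNth t β : Fin (p + 1) → ℝ)) ((k.succ.insertNth 0 γ : Fin (p + 1) → ℝ))
      = qaoaState n G (β + t • (Pi.single k 1 : Fin p → ℝ)) γ := by
    unfold qaoaState
    rw [uProd_merge G _ _ _ _ k.val k.isLt ?h1 ?h2 ?hm]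
    case h1 =>
      intro m hmk
      have hmp : m < p := by omega
      have hm1 : m < p + 1 := by omega
      rw [qaoaLayer_lt G hm1, qaoaLayer_lt G hmp,
        ins_lt _ _ _ hm1 hmp (by simpa using hmk),
        ins_lt _ _ _ hm1 hmp (by simp [Fin.val_succ]; omega),
        add_single_apply, if_neg (by simp [Fin.ext_iff]; omega)]
    case h2 =>
      intro m hle hlt
      have hmp : m - 1 < p := by omega
      rw [qaoaLayer_lt G hlt, qaoaLayer_lt G hmp,
        ins_gt _ _ _ hlt hmp (by simp; omega),
        ins_gt _ _ _ hlt hmp (by simp [Fin.val_succ]; omega),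
        add_single_apply, if_neg (by simp [Fin.ext_iff]; omega)]
    case hm =>
      have hk1 : k.val + 1 < p + 1 := by omega
      have hk0 : (k.val : ℕ) < p + 1 := by omega
      rw [qaoaLayer_lt G hk1, qaoaLayer_lt G hk0, qaoaLayer_lt G k.isLt,
        ins_gt _ _ _ hk1 (by omega : k.val + 1 - 1 < p) (by simp),
        ins_self _ _ _ hk1 (by simp [Fin.val_succ]),
        ins_self _ _ _ hk0 (by simp),
        ins_lt _ _ _ hk0 k.isLt (by simp [Fin.val_succ]),
        add_single_apply, if_pos (by simp [Fin.ext_iff])]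
      simp only [Nat.add_sub_cancel, Fin.eta]
      rw [uC_zero, mul_one, ← mul_assoc, ← uB_add]
  simp only [energyE, hst]

lemma keyD (k : Fin p) (β γ : Fin p → ℝ) (t : ℝ) :
    energyE n G (p + 1) ((k.castSucc.insertNth 0 β : Fin (p + 1) → ℝ), (k.succ.insertNth t γ : Fin (p + 1) → ℝ))
      = energyE n G p (β, γ + t • (Pi.single k 1 : Fin p → ℝ)) := by
  have hst : qaoaState n G ((k.castSucc.insertNth 0 β : Fin (p + 1) → ℝ)) ((k.succ.insertNth t γ : Fin (p + 1) → ℝ))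
      = qaoaState n G β (γ + t • (Pi.single k 1 : Fin p → ℝ)) := by
    unfold qaoaState
    rw [uProd_merge G _ _ _ _ k.val k.isLt ?h1 ?h2 ?hm]
    case h1 =>
      intro m hmk
      have hmp : m < p := by omega
      have hm1 : m < p + 1 := by omega
      rw [qaoaLayer_lt G hm1, qaoaLayer_lt G hmp,
        ins_lt _ _ _ hm1 hmp (by simpa using hmk),
        ins_lt _ _ _ hm1 hmp (by simp [Fin.val_succ]; omega),
        add_single_apply, if_neg (by simp [Fin.ext_iff]; omega)]
    case h2 =>
      intro m hle hlt
      have hmp : m - 1 < p := by omega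
      rw [qaoaLayer_lt G hlt, qaoaLayer_lt G hmp,
        ins_gt _ _ _ hlt hmp (by simp; omega),
        ins_gt _ _ _ hlt hmp (by simp [Fin.val_succ]; omega),
        add_single_apply, if_neg (by simp [Fin.ext_iff]; omega)]
    case hm =>
      have hk1 : k.val + 1 < p + 1 := by omega
      have hk0 : (k.val : ℕ) < p + 1 := by omega
      rw [qaoaLayer_lt G hk1, qaoaLayer_lt G hk0, qaoaLayer_lt G k.isLt,
        ins_gt _ _ _ hk1 (by omega : k.val + 1 - 1 < p) (by simp),
        ins_self _ _ _ hk1 (by simp [Fin.val_succ]),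
        ins_self _ _ _ hk0 (by simp),
        ins_lt _ _ _ hk0 k.isLt (by simp [Fin.val_succ]),
        add_single_apply, if_pos (by simp [Fin.ext_iff])]
      simp only [Nat.add_sub_cancel, Fin.eta]
      rw [uB_zero, one_mul, mul_assoc, ← uC_add, add_comm t (γ k)]
  simp only [energyE, hst]

lemma diff_expEntry (H : Matrix (QIdx n) (QIdx n) ℂ) (s u : QIdx n) :
    Differentiable ℝ (fun t : ℝ => NormedSpace.exp ((-Complex.I * (t : ℂ)) • H) s u) := by
  have h1 : Differentiable ℂ (fun z : ℂ => NormedSpace.exp (z • H)) := fun z =>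
    (hasFDerivAt_exp_smul_const (𝕂 := ℂ) H z).differentiableAt
  have h2 : Differentiable ℝ (fun t : ℝ => NormedSpace.exp ((-Complex.I * (t : ℂ)) • H)) := by
    have h3 : Differentiable ℝ (fun t : ℝ => (-Complex.I) * (t : ℂ)) :=
      Complex.ofRealCLM.differentiable.const_mul (-Complex.I)
    exact fun t => ((h1 _).restrictScalars ℝ).comp t (h3 t)
  let L : Matrix (QIdx n) (QIdx n) ℂ →ₗ[ℝ] ℂ :=
    { toFun := fun M => M s u
      map_add' := fun a b => rfl
      map_smul' := fun c a => rfl }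
  exact fun t => (L.toContinuousLinearMap.differentiableAt).comp t (h2 t)

lemma diff_uB_entry (n : ℕ) (s u : QIdx n) : Differentiable ℝ (fun t : ℝ => uB n t s u) := by
  simpa [uB] using diff_expEntry (hamB n) s u

lemma diff_uC_entry (s u : QIdx n) : Differentiable ℝ (fun t : ℝ => uC n G t s u) := by
  simpa [uC] using diff_expEntry (hamC n G) s u

lemma diff_layer_entry (m : ℕ) (s u : QIdx n) :
    Differentiable ℝ (fun x : (Fin p → ℝ) × (Fin p → ℝ) => qaoaLayer n G x.1 x.2 m s u) := by
  by_cases h : m < p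
  · have e : (fun x : (Fin p → ℝ) × (Fin p → ℝ) => qaoaLayer n G x.1 x.2 m s u)
        = fun x => ∑ w, uB n (x.1 ⟨m, h⟩) s w * uC n G (x.2 ⟨m, h⟩) w u := by
      funext x
      rw [qaoaLayer_lt G h, Matrix.mul_apply]
    rw [e]
    refine Differentiable.fun_sum fun w _ => Differentiable.mul ?_ ?_
    · have hc : Differentiable ℝ (fun x : (Fin p → ℝ) × (Fin p → ℝ) => x.1 ⟨m, h⟩) :=
        (ContinuousLinearMap.proj (R := ℝ) (φ := fun _ : Fin p => ℝ) ⟨m, h⟩).differentiable.comp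
          differentiable_fst
      exact (diff_uB_entry n s w).comp hc
    · have hc : Differentiable ℝ (fun x : (Fin p → ℝ) × (Fin p → ℝ) => x.2 ⟨m, h⟩) :=
        (ContinuousLinearMap.proj (R := ℝ) (φ := fun _ : Fin p => ℝ) ⟨m, h⟩).differentiable.comp
          differentiable_snd
      exact (diff_uC_entry G w u).comp hc
  · have e : (fun x : (Fin p → ℝ) × (Fin p → ℝ) => qaoaLayer n G x.1 x.2 m s u)
        = fun _ => (1 : Matrix (QIdx n) (QIdx n) ℂ) s u := by
      funext x
      rw [qaoaLayer, dif_neg h]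
    rw [e]
    exact differentiable_const _

lemma uProd_succ (β γ : Fin p → ℝ) (a len : ℕ) :
    uProd n G β γ a (len + 1) = qaoaLayer n G β γ (a + len) * uProd n G β γ a len := by
  unfold uProd
  rw [List.range'_concat]
  simp [List.reverse_append]

lemma diff_uProd_entry (a len : ℕ) :
    ∀ s u : QIdx n,
      Differentiable ℝ (fun x : (Fin p → ℝ) × (Fin p → ℝ) => uProd n G x.1 x.2 a len s u) := by
  induction len with
  | zero =>
    intro s u
    have e : (fun x : (Fin p → ℝ) × (Fin p → ℝ) => uProd n G x.1 x.2 a 0 s u)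
        = fun _ => (1 : Matrix (QIdx n) (QIdx n) ℂ) s u := by
      funext x
      simp [uProd]
    rw [e]
    exact differentiable_const _
  | succ len ih =>
    intro s u
    have e : (fun x : (Fin p → ℝ) × (Fin p → ℝ) => uProd n G x.1 x.2 a (len + 1) s u)
        = fun x => ∑ w, qaoaLayer n G x.1 x.2 (a + len) s w * uProd n G x.1 x.2 a len w u := by
      funext x
      rw [uProd_succ, Matrix.mul_apply]
    rw [e]
    exact Differentiable.fun_sum fun w _ => (diff_layer_entry G _ _ _).mul (ih w u)

lemma diff_energy : Differentiable ℝ (energyE n G p) := by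
  have hq : ∀ s, Differentiable ℝ
      (fun x : (Fin p → ℝ) × (Fin p → ℝ) => qaoaState n G x.1 x.2 s) := by
    intro s
    have e : (fun x : (Fin p → ℝ) × (Fin p → ℝ) => qaoaState n G x.1 x.2 s)
        = fun x => ∑ u, uProd n G x.1 x.2 0 p s u * plusState n u := by
      funext x
      simp [qaoaState, Matrix.mulVec, dotProduct]
    rw [e]
    exact Differentiable.fun_sum fun u _ => (diff_uProd_entry G 0 p s u).mul_const _
  have key : energyE n G p = fun x : (Fin p → ℝ) × (Fin p → ℝ) =>
      (∑ s, star (qaoaState n G x.1 x.2 s) * ∑ u, hamC n G s u * qaoaState n G x.1 x.2 u).re := by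
    funext x
    simp only [energyE, dotProduct, Matrix.mulVec, Pi.star_apply]
  rw [key]
  have hF : Differentiable ℝ (fun x : (Fin p → ℝ) × (Fin p → ℝ) =>
      ∑ s, star (qaoaState n G x.1 x.2 s) * ∑ u, hamC n G s u * qaoaState n G x.1 x.2 u) :=
    Differentiable.fun_sum fun s _ => ((hq s).star).mul
      (Differentiable.fun_sum fun u _ => (hq u).const_mul _)
  exact Complex.reCLM.differentiable.comp hF

lemma fderiv_line {E : Type*} [NormedAddCommGroup E] [NormedSpace ℝ E] (f : E → ℝ) (x v : E)
    (hf : DifferentiableAt ℝ f x) :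
    fderiv ℝ f x v = deriv (fun t : ℝ => f (x + t • v)) 0 := by
  have hline : HasDerivAt (fun t : ℝ => x + t • v) v 0 := by
    simpa using ((hasDerivAt_id (0 : ℝ)).smul_const v).const_add x
  have hF : HasFDerivAt f (fderiv ℝ f x) ((fun t : ℝ => x + t • v) 0) := by
    simpa using hf.hasFDerivAt
  have h2 : HasDerivAt (fun t : ℝ => f (x + t • v)) (fderiv ℝ f x (v)) 0 := by
    exact hF.comp_hasDerivAt 0 hline
  exact h2.deriv.symm

end

end Aux

/-- derivatives of the cost function at zero-padded points reduce to derivatives at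
the original point. -/
theorem stmt2 (n : ℕ) (hn : 1 ≤ n) (G : SimpleGraph (Fin n)) [DecidableRel G.Adj]
    (p : ℕ) (hp : 1 ≤ p) (β γ : Fin p → ℝ) :
    (∀ k : Fin p,
      pderiv' (energyE n G (p + 1)) (Sum.inl k.succ) (padded (β, γ) k.succ k.succ) =
        pderiv' (energyE n G p) (Sum.inl k) (β, γ)) ∧
    (∀ k : Fin p,
      pderiv' (energyE n G (p + 1)) (Sum.inr k.castSucc) (padded (β, γ) k.castSucc k.castSucc) =
        pderiv' (energyE n G p) (Sum.inr k) (β, γ)) ∧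
    (∀ k : Fin p,
      pderiv' (energyE n G (p + 1)) (Sum.inl k.castSucc) (padded (β, γ) k.castSucc k.succ) =
        pderiv' (energyE n G p) (Sum.inl k) (β, γ)) ∧
    (∀ k : Fin p,
      pderiv' (energyE n G (p + 1)) (Sum.inr k.succ) (padded (β, γ) k.castSucc k.succ) =
        pderiv' (energyE n G p) (Sum.inr k) (β, γ)) := by
  refine ⟨?_, ?_, ?_, ?_⟩
  · intro k
    simp only [pderiv']
    rw [fderiv_line _ _ _ ((diff_energy G).differentiableAt),
      fderiv_line _ _ _ ((diff_energy G).differentiableAt)]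
    congr 1
    funext t
    have e1 : padded (β, γ) k.succ k.succ + t • coordDir (Sum.inl k.succ)
        = ((k.succ.insertNth t β : Fin (p + 1) → ℝ), (k.succ.insertNth 0 γ : Fin (p + 1) → ℝ)) := by
      simp only [padded, coordDir, Sum.elim_inl, Prod.smul_mk, Prod.mk_add_mk, smul_zero,
        add_zero, insertNth_add_single]
    have e2 : ((β, γ) : (Fin p → ℝ) × (Fin p → ℝ)) + t • coordDir (Sum.inl k)
        = (β + t • (Pi.single k 1 : Fin p → ℝ), γ) := by
      simp only [coordDir, Sum.elim_inl, Prod.smul_mk, Prod.mk_add_mk, smul_zero, add_zero]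
    rw [e1, e2, keyA G k β γ t]
  · intro k
    simp only [pderiv']
    rw [fderiv_line _ _ _ ((diff_energy G).differentiableAt),
      fderiv_line _ _ _ ((diff_energy G).differentiableAt)]
    congr 1
    funext t
    have e1 : padded (β, γ) k.castSucc k.castSucc + t • coordDir (Sum.inr k.castSucc)
        = ((k.castSucc.insertNth 0 β : Fin (p + 1) → ℝ), (k.castSucc.insertNth t γ : Fin (p + 1) → ℝ)) := by
      simp only [padded, coordDir, Sum.elim_inr, Prod.smul_mk, Prod.mk_add_mk, smul_zero,
        add_zero, insertNth_add_single]
    have e2 : ((β, γ) : (Fin p → ℝ) × (Fin p → ℝ)) + t • coordDir (Sum.inr k)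
        = (β, γ + t • (Pi.single k 1 : Fin p → ℝ)) := by
      simp only [coordDir, Sum.elim_inr, Prod.smul_mk, Prod.mk_add_mk, smul_zero, add_zero]
    rw [e1, e2, keyB G k β γ t]
  · intro k
    simp only [pderiv']
    rw [fderiv_line _ _ _ ((diff_energy G).differentiableAt),
      fderiv_line _ _ _ ((diff_energy G).differentiableAt)]
    congr 1
    funext t
    have e1 : padded (β, γ) k.castSucc k.succ + t • coordDir (Sum.inl k.castSucc)
        = ((k.castSucc.insertNth t β : Fin (p + 1) → ℝ), (k.succ.insertNth 0 γ : Fin (p + 1) → ℝ)) := by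
      simp only [padded, coordDir, Sum.elim_inl, Prod.smul_mk, Prod.mk_add_mk, smul_zero,
        add_zero, insertNth_add_single]
    have e2 : ((β, γ) : (Fin p → ℝ) × (Fin p → ℝ)) + t • coordDir (Sum.inl k)
        = (β + t • (Pi.single k 1 : Fin p → ℝ), γ) := by
      simp only [coordDir, Sum.elim_inl, Prod.smul_mk, Prod.mk_add_mk, smul_zero, add_zero]
    rw [e1, e2, keyC G k β γ t]
  · intro k
    simp only [pderiv']
    rw [fderiv_line _ _ _ ((diff_energy G).differentiableAt),
      fderiv_line _ _ _ ((diff_energy G).differentiableAt)]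
    congr 1
    funext t
    have e1 : padded (β, γ) k.castSucc k.succ + t • coordDir (Sum.inr k.succ)
        = ((k.castSucc.insertNth 0 β : Fin (p + 1) → ℝ), (k.succ.insertNth t γ : Fin (p + 1) → ℝ)) := by
      simp only [padded, coordDir, Sum.elim_inr, Prod.smul_mk, Prod.mk_add_mk, smul_zero,
        add_zero, insertNth_add_single]
    have e2 : ((β, γ) : (Fin p → ℝ) × (Fin p → ℝ)) + t • coordDir (Sum.inr k)
        = (β, γ + t • (Pi.single k 1 : Fin p → ℝ)) := by
      simp only [coordDir, Sum.elim_inr, Prod.smul_mk, Prod.mk_add_mk, smul_zero, add_zero]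
    rw [e1, e2, keyD G k β γ t]
end

section
/- For every p ≥ 1 and every (β⋆,γ⋆) ∈ ℝ^p × ℝ^p, the derivative of the depth-(p+1) QAOA state with respect to γ_{p+1} at the padded point Γ^{p+1}(p+1,p+1) equals -i H_C |β⋆,γ⋆⟩, where |β⋆,γ⋆⟩ is the depth-p QAOA state; consequently ∂E_{p+1}/∂γ_{p+1} vanishes at Γ^{p+1}(p+1,p+1). -/
open Matrix Complex

noncomputable section StmtFourProof

open NormedSpace Matrix

attribute [local instance] Matrix.linftyOpSemiNormedRing Matrix.linftyOpNormedRing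
  Matrix.linftyOpNormedAlgebra

namespace StmtFour

variable {n : ℕ} (G : SimpleGraph (Fin n)) [DecidableRel G.Adj]

lemma uB_zero : uB n 0 = 1 := by
  simp [uB, NormedSpace.exp_zero]

lemma uC_zero : uC n G 0 = 1 := by
  simp [uC, NormedSpace.exp_zero]

lemma uC_eq_exp_real (t : ℝ) :
    uC n G t = NormedSpace.exp (t • ((-Complex.I) • hamC n G)) := by
  have h1 : ((-Complex.I) * (t : ℂ)) • hamC n G = t • ((-Complex.I) • hamC n G) := by
    rw [← smul_assoc]
    congr 1
    simp [Complex.real_smul, mul_comm]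
  rw [uC, h1]

lemma uB_eq_exp_real (t : ℝ) :
    uB n t = NormedSpace.exp (t • ((-Complex.I) • hamB n)) := by
  have h1 : ((-Complex.I) * (t : ℂ)) • hamB n = t • ((-Complex.I) • hamB n) := by
    rw [← smul_assoc]
    congr 1
    simp [Complex.real_smul, mul_comm]
  rw [uB, h1]

lemma hasDerivAt_uC (γ : ℝ) :
    HasDerivAt (fun t : ℝ => uC n G t) (uC n G γ * ((-Complex.I) • hamC n G)) γ := by
  have h := hasDerivAt_exp_smul_const (𝕂 := ℝ) ((-Complex.I) • hamC n G) γ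
  rw [show (fun t : ℝ => uC n G t) = fun u : ℝ => NormedSpace.exp (u • ((-Complex.I) • hamC n G))
    from funext (uC_eq_exp_real G), uC_eq_exp_real]
  exact h

lemma hasDerivAt_uB (t : ℝ) :
    HasDerivAt (fun t : ℝ => uB n t) (uB n t * ((-Complex.I) • hamB n)) t := by
  have h := hasDerivAt_exp_smul_const (𝕂 := ℝ) ((-Complex.I) • hamB n) t
  rw [show (fun t : ℝ => uB n t) = fun u : ℝ => NormedSpace.exp (u • ((-Complex.I) • hamB n))
    from funext uB_eq_exp_real, uB_eq_exp_real]
  exact h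

lemma differentiable_uC : Differentiable ℝ (fun t : ℝ => uC n G t) :=
  fun t => (hasDerivAt_uC G t).differentiableAt

lemma differentiable_uB : Differentiable ℝ (fun t : ℝ => uB n t) :=
  fun t => (hasDerivAt_uB (n := n) t).differentiableAt

variable {q : ℕ}

lemma differentiable_proj1 (i : Fin q) :
    Differentiable ℝ (fun x : (Fin q → ℝ) × (Fin q → ℝ) => x.1 i) :=
  by fun_prop

lemma differentiable_proj2 (i : Fin q) :
    Differentiable ℝ (fun x : (Fin q → ℝ) × (Fin q → ℝ) => x.2 i) :=
  by fun_prop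

lemma differentiable_qaoaLayer (m : ℕ) :
    Differentiable ℝ (fun x : (Fin q → ℝ) × (Fin q → ℝ) => qaoaLayer n G x.1 x.2 m) := by
  unfold qaoaLayer
  by_cases h : m < q
  · simp only [dif_pos h]
    exact ((differentiable_uB.comp (differentiable_proj1 ⟨m, h⟩)).mul
      ((differentiable_uC G).comp (differentiable_proj2 ⟨m, h⟩)))
  · simp only [dif_neg h]
    exact differentiable_const _

lemma uProd_succ (β γ : Fin q → ℝ) (a len : ℕ) :
    uProd n G β γ a (len + 1) = qaoaLayer n G β γ (a + len) * uProd n G β γ a len := by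
  rw [uProd, uProd, List.range'_concat]
  simp

lemma differentiable_uProd (a len : ℕ) :
    Differentiable ℝ (fun x : (Fin q → ℝ) × (Fin q → ℝ) => uProd n G x.1 x.2 a len) := by
  induction len with
  | zero => simp only [uProd, List.range', List.reverse_nil, List.map_nil, List.prod_nil]
            exact differentiable_const _
  | succ len ih =>
      simp only [uProd_succ]
      exact (differentiable_qaoaLayer G (a + len)).mul ih

/-- `mulVec` by a fixed vector, as a continuous linear map over `ℝ`. -/
def mulVecCLM (v : QIdx n → ℂ) :
    Matrix (QIdx n) (QIdx n) ℂ →L[ℝ] (QIdx n → ℂ) :=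
  LinearMap.toContinuousLinearMap
    { toFun := fun M => M.mulVec v
      map_add' := fun A B => Matrix.add_mulVec A B v
      map_smul' := fun r A => Matrix.smul_mulVec r A v }

@[simp] lemma mulVecCLM_apply (v : QIdx n → ℂ) (M : Matrix (QIdx n) (QIdx n) ℂ) :
    mulVecCLM v M = M.mulVec v := rfl

lemma differentiable_qaoaState :
    Differentiable ℝ (fun x : (Fin q → ℝ) × (Fin q → ℝ) => qaoaState n G x.1 x.2) := by
  have : (fun x : (Fin q → ℝ) × (Fin q → ℝ) => qaoaState n G x.1 x.2)
      = fun x => mulVecCLM (plusState n) (uProd n G x.1 x.2 0 q) := rfl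
  rw [this]
  exact (mulVecCLM (plusState n)).differentiable.comp (differentiable_uProd G 0 q)

end StmtFour
end StmtFourProof
noncomputable section StmtFourProof2
open Matrix
namespace StmtFour

variable {n : ℕ} (G : SimpleGraph (Fin n)) [DecidableRel G.Adj] {p : ℕ}

lemma qaoaLayer_snoc_lt (β γ : Fin p → ℝ) (c d : ℝ) (m : ℕ) (h : m < p) :
    qaoaLayer n G (Fin.snoc β c) (Fin.snoc γ d) m = qaoaLayer n G β γ m := by
  rw [qaoaLayer, qaoaLayer, dif_pos h, dif_pos (Nat.lt_succ_of_lt h)]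
  have h1 : (⟨m, Nat.lt_succ_of_lt h⟩ : Fin (p + 1)) = Fin.castSucc ⟨m, h⟩ := rfl
  rw [h1, Fin.snoc_castSucc, Fin.snoc_castSucc]

lemma uProd_snoc_lt (β γ : Fin p → ℝ) (c d : ℝ) (a len : ℕ) (h : a + len ≤ p) :
    uProd n G (Fin.snoc β c) (Fin.snoc γ d) a len = uProd n G β γ a len := by
  induction len with
  | zero => simp [uProd, List.range']
  | succ len ih =>
      rw [uProd_succ, uProd_succ, ih (by omega),
        qaoaLayer_snoc_lt G β γ c d (a + len) (by omega)]

lemma qaoaState_snoc (β γ : Fin p → ℝ) (t : ℝ) :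
    qaoaState n G (Fin.snoc β 0) (Fin.snoc γ t)
      = (uC n G t).mulVec (qaoaState n G β γ) := by
  rw [qaoaState, qaoaState, uProd_succ, uProd_snoc_lt G β γ 0 t 0 p (by omega)]
  rw [show qaoaLayer n G (Fin.snoc β (0:ℝ)) (Fin.snoc γ t) (0 + p) = uC n G t by
    rw [qaoaLayer, dif_pos (show 0 + p < p + 1 by omega)]
    have h1 : (⟨0 + p, by omega⟩ : Fin (p + 1)) = Fin.last p := by
      ext; simp
    rw [h1, Fin.snoc_last, Fin.snoc_last, uB_zero, one_mul]]
  rw [← Matrix.mulVec_mulVec]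

lemma qaoaState_snoc_zero (β γ : Fin p → ℝ) :
    qaoaState n G (Fin.snoc β 0) (Fin.snoc γ 0) = qaoaState n G β γ := by
  rw [qaoaState_snoc, uC_zero, Matrix.one_mulVec]

/-- diagonal entries of `hamC`, as real numbers -/
def zr : Fin 2 → ℝ := fun a => if a = 0 then 1 else -1

lemma pauliZ_diag (a : Fin 2) : pauliZ a a = ((zr a : ℝ) : ℂ) := by
  fin_cases a <;> simp [pauliZ, zr]

def hamDiag (s : QIdx n) : ℝ :=
  ∑ e ∈ G.edgeFinset,
    Sym2.lift ⟨fun i j => zr (s i) * zr (s j), fun i j => mul_comm _ _⟩ e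

lemma hamC_eq_diagonal :
    hamC n G = Matrix.diagonal (fun s => ((hamDiag G s : ℝ) : ℂ)) := by
  rw [hamC]
  have key : ∀ e ∈ G.edgeFinset,
      Sym2.lift ⟨fun i j => sigmaZ i * sigmaZ j, fun i j => sigmaZ_mul_comm i j⟩ e
        = Matrix.diagonal (fun s : QIdx n =>
            ((Sym2.lift ⟨fun i j => zr (s i) * zr (s j), fun i j => mul_comm _ _⟩ e : ℝ) : ℂ)) := by
    intro e _
    induction e using Sym2.ind with
    | _ i j =>
        rw [Sym2.lift_mk]
        simp only [Sym2.lift_mk]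
        rw [sigmaZ_eq_diagonal, sigmaZ_eq_diagonal, Matrix.diagonal_mul_diagonal]
        refine congrArg Matrix.diagonal (funext fun s => ?_)
        rw [pauliZ_diag, pauliZ_diag]
        push_cast
        ring
  rw [Finset.sum_congr rfl key]
  ext s t
  by_cases h : s = t
  · subst h
    simp [Matrix.sum_apply, Matrix.diagonal_apply_eq, hamDiag]
  · simp [Matrix.sum_apply, Matrix.diagonal_apply_ne _ h]

end StmtFour
end StmtFourProof2
noncomputable section StmtFourProof3
open Matrix NormedSpace
namespace StmtFour

variable {n : ℕ} (G : SimpleGraph (Fin n)) [DecidableRel G.Adj] {p : ℕ}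

/-- The sesquilinear energy form as an `ℝ`-bilinear map. -/
def sesqL (H : Matrix (QIdx n) (QIdx n) ℂ) :
    (QIdx n → ℂ) →ₗ[ℝ] (QIdx n → ℂ) →ₗ[ℝ] ℂ :=
  LinearMap.mk₂ ℝ (fun u v => star u ⬝ᵥ H.mulVec v)
    (fun u u' v => by rw [star_add, add_dotProduct])
    (fun r u v => by
      rw [star_smul, star_trivial, smul_dotProduct])
    (fun u v v' => by rw [Matrix.mulVec_add, dotProduct_add])
    (fun r u v => by rw [Matrix.mulVec_smul, dotProduct_smul])

/-- The sesquilinear energy form as a continuous `ℝ`-bilinear map. -/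
def sesqB (H : Matrix (QIdx n) (QIdx n) ℂ) :
    (QIdx n → ℂ) →L[ℝ] (QIdx n → ℂ) →L[ℝ] ℂ :=
  LinearMap.toContinuousLinearMap
    ((LinearMap.toContinuousLinearMap :
        ((QIdx n → ℂ) →ₗ[ℝ] ℂ) ≃ₗ[ℝ] ((QIdx n → ℂ) →L[ℝ] ℂ)).toLinearMap.comp (sesqL H))

@[simp] lemma sesqB_apply (H : Matrix (QIdx n) (QIdx n) ℂ) (u v : QIdx n → ℂ) :
    sesqB H u v = star u ⬝ᵥ H.mulVec v := rfl

end StmtFour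
end StmtFourProof3
noncomputable section StmtFourProof4
open Matrix NormedSpace
namespace StmtFour

variable {n : ℕ} (G : SimpleGraph (Fin n)) [DecidableRel G.Adj]

lemma key_cancel (ψ : QIdx n → ℂ) :
    star ψ ⬝ᵥ (hamC n G).mulVec ((-Complex.I) • (hamC n G).mulVec ψ)
      + star ((-Complex.I) • (hamC n G).mulVec ψ) ⬝ᵥ (hamC n G).mulVec ψ = 0 := by
  rw [hamC_eq_diagonal]
  simp only [dotProduct, Matrix.mulVec_diagonal, Pi.star_apply, Pi.smul_apply, smul_eq_mul]
  rw [← Finset.sum_add_distrib]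
  apply Finset.sum_eq_zero
  intro s _
  simp only [Complex.star_def, _root_.map_mul, map_neg, Complex.conj_I,
    Complex.conj_ofReal, neg_neg, neg_mul, mul_neg]
  ring

end StmtFour
end StmtFourProof4

section StmtFourMain

attribute [local instance] Matrix.linftyOpSemiNormedRing Matrix.linftyOpNormedRing
  Matrix.linftyOpNormedAlgebra

/-- the derivative of the depth-`(p+1)` state with respect to `γ_(p+1)` at
`Γ^(p+1)(p+1,p+1)` equals `-i H_C |β⋆,γ⋆⟩`, and `∂E_(p+1)/∂γ_(p+1)` vanishes there. -/
theorem stmt4 (n : ℕ) (hn : 1 ≤ n) (G : SimpleGraph (Fin n)) [DecidableRel G.Adj]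
    (p : ℕ) (hp : 1 ≤ p) (β γ : Fin p → ℝ) :
    fderiv ℝ (fun x : (Fin (p + 1) → ℝ) × (Fin (p + 1) → ℝ) => qaoaState n G x.1 x.2)
        (padded (β, γ) (Fin.last p) (Fin.last p)) (coordDir (Sum.inr (Fin.last p))) =
      (-Complex.I) • (hamC n G).mulVec (qaoaState n G β γ) ∧
    pderiv' (energyE n G (p + 1)) (Sum.inr (Fin.last p))
      (padded (β, γ) (Fin.last p) (Fin.last p)) = 0 := by
  classical
  set F : (Fin (p + 1) → ℝ) × (Fin (p + 1) → ℝ) → (QIdx n → ℂ) :=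
    fun x => qaoaState n G x.1 x.2 with hF
  set ψ : QIdx n → ℂ := qaoaState n G β γ with hψ
  set x₀ := padded (β, γ) (Fin.last p) (Fin.last p) with hx₀def
  set v : (Fin (p + 1) → ℝ) × (Fin (p + 1) → ℝ) := coordDir (Sum.inr (Fin.last p)) with hv
  have hx0 : x₀ = (Fin.snoc β 0, Fin.snoc γ 0) := by
    rw [hx₀def]
    simp [padded, Fin.insertNth_last']
  have hline : ∀ t : ℝ, x₀ + t • v = (Fin.snoc β 0, Fin.snoc γ t) := by
    intro t
    have hv' : v = (0, Pi.single (Fin.last p) (1 : ℝ)) := rfl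
    rw [hx0, hv', Prod.smul_mk, smul_zero, Prod.mk_add_mk, add_zero, Prod.mk.injEq]
    refine ⟨rfl, ?_⟩
    funext j
    induction j using Fin.lastCases with
    | last => simp [Fin.snoc_last]
    | cast i =>
        simp [Fin.snoc_castSucc, Pi.single_eq_of_ne (Fin.castSucc_lt_last i).ne]
  have hlineF : (fun t : ℝ => F (x₀ + t • v)) = fun t => StmtFour.mulVecCLM ψ (uC n G t) := by
    funext t
    rw [hline t]
    simp only [hF, hψ]
    rw [StmtFour.qaoaState_snoc, StmtFour.mulVecCLM_apply]
  have hDline : HasDerivAt (fun t : ℝ => F (x₀ + t • v))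
      ((-Complex.I) • (hamC n G).mulVec ψ) 0 := by
    rw [hlineF]
    have h1 := (StmtFour.mulVecCLM ψ).hasFDerivAt.comp_hasDerivAt 0
      (StmtFour.hasDerivAt_uC G 0)
    have h2 : (-Complex.I) • (hamC n G).mulVec ψ
        = StmtFour.mulVecCLM ψ (uC n G 0 * ((-Complex.I) • hamC n G)) := by
      rw [StmtFour.uC_zero, one_mul, StmtFour.mulVecCLM_apply, Matrix.smul_mulVec]
    rw [h2]
    exact h1
  have hdiffF : Differentiable ℝ F := StmtFour.differentiable_qaoaState G
  have h1 : fderiv ℝ F x₀ v = (-Complex.I) • (hamC n G).mulVec ψ := by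
    rw [← (hdiffF x₀).lineDeriv_eq_fderiv,
      show lineDeriv ℝ F x₀ v = deriv (fun t : ℝ => F (x₀ + t • v)) 0 from rfl,
      hDline.deriv]
  refine ⟨h1, ?_⟩
  -- second part
  have hψ0 : F x₀ = ψ := by
    rw [hx0]
    exact StmtFour.qaoaState_snoc_zero G β γ
  set b := StmtFour.sesqB (n := n) (hamC n G) with hbdef
  have hbb := b.isBoundedBilinearMap
  set dCLM : (QIdx n → ℂ) →L[ℝ] (QIdx n → ℂ) × (QIdx n → ℂ) :=
    (ContinuousLinearMap.id ℝ (QIdx n → ℂ)).prod (ContinuousLinearMap.id ℝ (QIdx n → ℂ))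
    with hdCLM
  have hdiag : HasFDerivAt (fun y : QIdx n → ℂ => (y, y)) dCLM ψ := dCLM.hasFDerivAt
  have hQ : HasFDerivAt (fun y : QIdx n → ℂ => b y y)
      ((hbb.deriv (ψ, ψ)).comp dCLM) ψ :=
    HasFDerivAt.comp (g := fun q : (QIdx n → ℂ) × (QIdx n → ℂ) => b q.1 q.2)
      (f := fun y : QIdx n → ℂ => (y, y)) ψ (hbb.hasFDerivAt (ψ, ψ)) hdiag
  have hFd : HasFDerivAt F (fderiv ℝ F x₀) x₀ := (hdiffF x₀).hasFDerivAt
  rw [← hψ0] at hQ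
  have hQF := hQ.comp x₀ hFd
  have hE := Complex.reCLM.hasFDerivAt.comp x₀ hQF
  have hE2 : HasFDerivAt (energyE n G (p + 1))
      (Complex.reCLM.comp (((hbb.deriv (F x₀, F x₀)).comp dCLM).comp (fderiv ℝ F x₀))) x₀ := hE
  show fderiv ℝ (energyE n G (p + 1)) x₀ (coordDir (Sum.inr (Fin.last p))) = 0
  rw [hE2.fderiv]
  simp only [ContinuousLinearMap.comp_apply]
  rw [show coordDir (Sum.inr (Fin.last p)) = v from hv ▸ rfl, h1, hψ0]
  have hdval : dCLM ((-Complex.I) • (hamC n G).mulVec ψ)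
      = ((-Complex.I) • (hamC n G).mulVec ψ, (-Complex.I) • (hamC n G).mulVec ψ) := rfl
  rw [hdval, hbb.deriv_apply]
  simp only [hbdef, StmtFour.sesqB_apply]
  rw [StmtFour.key_cancel]
  simp

end StmtFourMain
end
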